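/- Let a > 0, d > 0, b < 0 and e > 0. Then b²e² − abde > 0, and the numbers ω₁ = (ad − 2be − 2√(b²e² − abde))/a² and ω₂ = (ad − 2be + 2√(b²e² − abde))/a² satisfy 0 < ω₁ < ω₂. Moreover, for every ω > 0 the discriminant expression (d − ωa)² + 4ωbe is negative if and only if ω₁ < ω < ω₂, so the eigenvalues λ = (1/(2c))( d + ωa ± √((d − ωa)² + 4ωbe) ) of the linearization are real and positive for ω ∈ (0, ω₁) ∪ (ω₂, ∞) and complex with positive real part for ω ∈ (ω₁, ω₂). -/
import Mathlib


open Real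

/-- the discriminant `(d − ωa)² + 4ωbe` is negative exactly for
`ω ∈ (ω₁, ω₂)`, with `0 < ω₁ < ω₂`, and the eigenvalues
`λ = (d + ωa ± √((d−ωa)² + 4ωbe))/(2c)` are real positive for `ω ∈ (0,ω₁) ∪ (ω₂,∞)`
and complex with positive real part for `ω ∈ (ω₁, ω₂)`. -/
theorem eigenvalue_structure_at_B
    (a d b e c ω₁ ω₂ : ℝ) (ha : 0 < a) (hd : 0 < d) (hb : b < 0) (he : 0 < e) (hc : 0 < c)
    (hω₁ : ω₁ = (a * d - 2 * b * e - 2 * Real.sqrt (b ^ 2 * e ^ 2 - a * b * d * e)) / a ^ 2)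
    (hω₂ : ω₂ = (a * d - 2 * b * e + 2 * Real.sqrt (b ^ 2 * e ^ 2 - a * b * d * e)) / a ^ 2) :
    0 < b ^ 2 * e ^ 2 - a * b * d * e ∧
    0 < ω₁ ∧ ω₁ < ω₂ ∧
    (∀ ω : ℝ, 0 < ω →
      ((d - ω * a) ^ 2 + 4 * ω * b * e < 0 ↔ ω₁ < ω ∧ ω < ω₂)) ∧
    (∀ ω : ℝ, 0 < ω → (ω < ω₁ ∨ ω₂ < ω) →
      0 ≤ (d - ω * a) ^ 2 + 4 * ω * b * e ∧
      0 < (d + ω * a - Real.sqrt ((d - ω * a) ^ 2 + 4 * ω * b * e)) / (2 * c) ∧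
      0 < (d + ω * a + Real.sqrt ((d - ω * a) ^ 2 + 4 * ω * b * e)) / (2 * c)) ∧
    (∀ ω : ℝ, ω₁ < ω → ω < ω₂ →
      (d - ω * a) ^ 2 + 4 * ω * b * e < 0 ∧ 0 < (d + ω * a) / (2 * c)) := by
  have hbe : 0 < b ^ 2 * e ^ 2 - a * b * d * e := by
    nlinarith [sq_nonneg (b * e), mul_pos (mul_pos (mul_pos ha (neg_pos.mpr hb)) hd) he]
  set S := Real.sqrt (b ^ 2 * e ^ 2 - a * b * d * e) with hSdef
  have hS2 : S ^ 2 = b ^ 2 * e ^ 2 - a * b * d * e := Real.sq_sqrt hbe.le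
  have hSpos : 0 < S := Real.sqrt_pos.mpr hbe
  have ha2 : (0:ℝ) < a ^ 2 := by positivity
  have hK : 2 * S < a * d - 2 * b * e := by
    nlinarith [mul_pos ha hd, mul_pos (neg_pos.mpr hb) he]
  have hω₁pos : 0 < ω₁ := by rw [hω₁]; exact div_pos (by linarith) ha2
  have hω₁₂ : ω₁ < ω₂ := by
    rw [hω₁, hω₂]; exact (div_lt_div_iff_of_pos_right ha2).mpr (by linarith)
  have hiff : ∀ ω : ℝ, 0 < ω →
      ((d - ω * a) ^ 2 + 4 * ω * b * e < 0 ↔ ω₁ < ω ∧ ω < ω₂) := by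
    intro ω hω
    rw [hω₁, hω₂, div_lt_iff₀ ha2, lt_div_iff₀ ha2]
    constructor
    · intro h
      constructor
      · nlinarith [sq_nonneg (ω * a ^ 2 - (a * d - 2 * b * e) + 2 * S)]
      · nlinarith [sq_nonneg (ω * a ^ 2 - (a * d - 2 * b * e) - 2 * S)]
    · rintro ⟨h1, h2⟩
      nlinarith [mul_pos (sub_pos.mpr h1) (sub_pos.mpr h2)]
  refine ⟨hbe, hω₁pos, hω₁₂, hiff, ?_, ?_⟩
  · intro ω hω hor
    have hq : 0 ≤ (d - ω * a) ^ 2 + 4 * ω * b * e := by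
      by_contra h
      push_neg at h
      obtain ⟨h1, h2⟩ := (hiff ω hω).mp h
      rcases hor with h' | h' <;> linarith
    refine ⟨hq, ?_, ?_⟩
    · apply div_pos _ (by linarith)
      have hs := Real.sq_sqrt hq
      have hsn := Real.sqrt_nonneg ((d - ω * a) ^ 2 + 4 * ω * b * e)
      have hlt : (d - ω * a) ^ 2 + 4 * ω * b * e < (d + ω * a) ^ 2 := by
        nlinarith [mul_pos hω (mul_pos ha hd), mul_pos hω (mul_pos (neg_pos.mpr hb) he)]
      have hT : 0 < d + ω * a := by linarith [mul_pos hω ha]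
      have := (Real.sqrt_lt' hT).mpr hlt
      linarith
    · apply div_pos _ (by linarith)
      have hsn := Real.sqrt_nonneg ((d - ω * a) ^ 2 + 4 * ω * b * e)
      linarith [mul_pos hω ha]
  · intro ω h1 h2
    have hω : 0 < ω := lt_trans hω₁pos h1
    exact ⟨(hiff ω hω).mpr ⟨h1, h2⟩, div_pos (by linarith [mul_pos hω ha]) (by linarith)⟩
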